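/- If A ∈ ℝ^{m×n} with m ≥ n and J = diag(I_p, −I_q) with p + q = m is a signature matrix, and AᵀJA is positive definite, then the submatrix A(1:p, 1:n) (the first p rows of A) has full column rank n; in particular p ≥ n and A has full column rank. -/

import Mathlib

open Matrix

lemma aux_rank_of_inj {m' : Type*} {n : ℕ} [Fintype m'] (M : Matrix m' (Fin n) ℝ)
    (h : Function.Injective M.mulVecLin) : M.rank = n := by
  rw [Matrix.rank, LinearMap.finrank_range_of_inj h]
  simp

/-- If `A ∈ ℝ^{m×n}` (with `m = p + q ≥ n`, rows indexed by `Fin p ⊕ Fin q`),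
`J = diag(I_p, −I_q)` is a signature matrix, and `AᵀJA` is positive definite,
then the first `p` rows of `A` form a matrix of full column rank `n`;
in particular `p ≥ n` and `A` has full column rank. -/
theorem ils_posDef_implies_full_rank {p q n : ℕ}
    (A : Matrix (Fin p ⊕ Fin q) (Fin n) ℝ)
    (hmn : n ≤ p + q)
    (J : Matrix (Fin p ⊕ Fin q) (Fin p ⊕ Fin q) ℝ)
    (hJ : J = Matrix.fromBlocks 1 0 0 (-1))
    (hPD : (Aᵀ * J * A).PosDef) :
    (A.submatrix Sum.inl id).rank = n ∧ n ≤ p ∧ A.rank = n := by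
  have key : ∀ x : Fin n → ℝ, (A.submatrix Sum.inl id) *ᵥ x = 0 → x = 0 := by
    intro x hx
    by_contra hx0
    have hpos := hPD.dotProduct_mulVec_pos hx0
    rw [show star x = x from star_trivial x] at hpos
    have hquad : x ⬝ᵥ (Aᵀ * J * A) *ᵥ x = (A *ᵥ x) ⬝ᵥ (J *ᵥ (A *ᵥ x)) := by
      rw [← Matrix.mulVec_mulVec, ← Matrix.mulVec_mulVec, dotProduct_mulVec,
        Matrix.vecMul_transpose]
    set y := A *ᵥ x with hy
    have hyl : ∀ i : Fin p, y (Sum.inl i) = 0 := by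
      intro i
      have := congrFun hx i
      simpa [hy, Matrix.mulVec, dotProduct, Matrix.submatrix] using this
    have hJy : y ⬝ᵥ (J *ᵥ y) = - ∑ j : Fin q, y (Sum.inr j) ^ 2 := by
      subst hJ
      simp [dotProduct, Fintype.sum_sum_type, Matrix.mulVec, hyl,
        Matrix.fromBlocks, Matrix.one_apply, pow_two]
    have hle : x ⬝ᵥ (Aᵀ * J * A) *ᵥ x ≤ 0 := by
      rw [hquad, hJy]
      simp only [neg_nonpos]
      positivity
    linarith
  have hinj : Function.Injective (A.submatrix Sum.inl id).mulVecLin := by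
    rw [← LinearMap.ker_eq_bot, LinearMap.ker_eq_bot']
    intro x hx
    exact key x hx
  have hinjA : Function.Injective A.mulVecLin := by
    rw [← LinearMap.ker_eq_bot, LinearMap.ker_eq_bot']
    intro x hx
    apply key
    ext i
    exact congrFun (show A *ᵥ x = 0 from hx) (Sum.inl i)
  have h1 : (A.submatrix Sum.inl id).rank = n := aux_rank_of_inj _ hinj
  refine ⟨h1, ?_, aux_rank_of_inj _ hinjA⟩
  calc n = (A.submatrix Sum.inl id).rank := h1.symm
    _ ≤ p := by simpa using (A.submatrix Sum.inl id).rank_le_card_height
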